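/- Let ω ∈ {0,1}^ℕ be an aperiodic infinite binary word. Then the abelian complexity of ω satisfies ρ^ab_ω(n) = 2 for all odd n and ρ^ab_ω(n) = 3 for all even n ≥ 2, if and only if there exists an infinite binary word ω' such that ω = μ(ω'), ω = 0μ(ω'), or ω = 1μ(ω'), where μ is the Thue-Morse morphism defined by μ(0) = 01 and μ(1) = 10. -/

import Mathlib

/-- The factor of the infinite word `ω` of length `n` starting at position `i`. -/
def factor {A : Type*} (ω : ℕ → A) (i n : ℕ) : List A :=
  (List.range n).map fun j => ω (i + j)

/-- The abelian complexity of `ω`: the number of abelian equivalence classes of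
factors of `ω` of length `n`. -/
noncomputable def abelianComplexity {A : Type*} [DecidableEq A] (ω : ℕ → A) (n : ℕ) : ℕ :=
  Set.ncard {c : A → ℕ | ∃ i : ℕ, c = fun a => (factor ω i n).count a}

/-- `ω` is ultimately periodic. -/
def UltimatelyPeriodic {A : Type*} (ω : ℕ → A) : Prop :=
  ∃ m p : ℕ, 0 < p ∧ ∀ n : ℕ, m ≤ n → ω (n + p) = ω n

/-- The image of the infinite word `ω'` under the Thue-Morse morphism
`μ(0) = 01`, `μ(1) = 10`. -/
def muWord (ω' : ℕ → Fin 2) : ℕ → Fin 2 :=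
  fun n => if n % 2 = 0 then ω' (n / 2) else 1 - ω' (n / 2)

namespace TM

def v2 (a : Fin 2) : ℕ := if a = 1 then 1 else 0

lemma fin2_cases (a : Fin 2) : a = 0 ∨ a = 1 := by omega
lemma v2_le (a : Fin 2) : v2 a ≤ 1 := by rcases fin2_cases a with h | h <;> simp [v2, h]
lemma v2_eq_zero : ∀ {a : Fin 2}, v2 a = 0 → a = 0 := by decide
lemma v2_eq_one : ∀ {a : Fin 2}, v2 a = 1 → a = 1 := by decide
lemma v2_one_sub : ∀ a : Fin 2, v2 a + v2 (1 - a) = 1 := by decide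
lemma fin2_flip : ∀ {a b : Fin 2}, b = 1 - a → a = 1 - b := by decide
lemma fin2_ne_flip : ∀ {a b : Fin 2}, b ≠ 1 - a → b = a := by decide
lemma v2_inj : ∀ {a b : Fin 2}, v2 a = v2 b → a = b := by decide

def cnt (ω : ℕ → Fin 2) (i n : ℕ) : ℕ := (factor ω i n).count 1

lemma cnt_zero (ω : ℕ → Fin 2) (i : ℕ) : cnt ω i 0 = 0 := rfl

lemma cnt_succ_right (ω : ℕ → Fin 2) (i n : ℕ) :
    cnt ω i (n + 1) = cnt ω i n + v2 (ω (i + n)) := by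
  have h : factor ω i (n+1) = factor ω i n ++ [ω (i+n)] := by
    simp [factor, List.range_succ]
  rw [cnt, h, List.count_append]
  rcases fin2_cases (ω (i+n)) with h | h <;> simp [cnt, v2, h]

lemma cnt_succ_left (ω : ℕ → Fin 2) (i n : ℕ) :
    cnt ω i (n + 1) = v2 (ω i) + cnt ω (i + 1) n := by
  have h : factor ω i (n+1) = ω i :: factor ω (i+1) n := by
    simp only [factor, List.range_succ_eq_map, List.map_cons, List.map_map]
    congr 1
    · norm_num
      intro a _
      congr 1
      omega
  rw [cnt, h, List.count_cons]
  rcases fin2_cases (ω i) with h | h <;> simp [cnt, v2, h] <;> omega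

lemma cnt_le (ω : ℕ → Fin 2) (i n : ℕ) : cnt ω i n ≤ n := by
  have := List.count_le_length (a := (1 : Fin 2)) (l := factor ω i n)
  simpa [cnt, factor] using this

lemma cnt_step (ω : ℕ → Fin 2) (i n : ℕ) :
    cnt ω (i + 1) n + v2 (ω i) = cnt ω i n + v2 (ω (i + n)) := by
  have h1 := cnt_succ_left ω i n
  have h2 := cnt_succ_right ω i n
  omega

lemma cnt_two (ω : ℕ → Fin 2) (i : ℕ) : cnt ω i 2 = v2 (ω i) + v2 (ω (i + 1)) := by
  have h1 := cnt_succ_right ω i 1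
  have h0 := cnt_succ_right ω i 0
  have hz := cnt_zero ω i
  norm_num at h1 h0
  omega

lemma count_zero_add_count_one (l : List (Fin 2)) : l.count 0 + l.count 1 = l.length := by
  induction l with
  | nil => simp
  | cons a l ih =>
    rcases fin2_cases a with h | h <;> simp [List.count_cons, h] <;> omega



lemma exists_stable : ∀ (B : ℕ) (s : ℕ → ℕ), Monotone s → (∀ t, s t ≤ B) →
    ∃ M, ∀ t, M ≤ t → s t = s M := by
  intro B
  induction B with
  | zero =>
    intro s _ hb
    exact ⟨0, fun t _ => by have := hb t; have := hb 0; omega⟩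
  | succ B ih =>
    intro s hs hb
    by_cases h : ∀ t, s t ≤ s 0
    · exact ⟨0, fun t _ => le_antisymm (h t) (hs (Nat.zero_le t))⟩
    · push_neg at h
      obtain ⟨t₁, ht₁⟩ := h
      obtain ⟨M', hM'⟩ := ih (fun t => s (t₁ + t) - 1)
        (fun a b hab => Nat.sub_le_sub_right (hs (by omega)) 1)
        (fun t => by show s (t₁ + t) - 1 ≤ B; have := hb (t₁ + t); omega)
      refine ⟨t₁ + M', fun t ht => ?_⟩
      have h1 := hM' (t - t₁) (by omega)
      try simp only at h1
      have e1 : t₁ + (t - t₁) = t := by omega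
      rw [e1] at h1
      have hm1 : s t₁ ≤ s t := hs (by omega)
      have hm2 : s t₁ ≤ s (t₁ + M') := hs (by omega)
      omega

lemma jump {ν : ℕ → Fin 2} (hν : ¬ UltimatelyPeriodic ν) {e : ℕ} (he : 0 < e) :
    ∃ m, ν m = 1 ∧ ν (m + e) = 0 := by
  by_contra hcon
  push_neg at hcon
  have mono : ∀ m, v2 (ν m) ≤ v2 (ν (m + e)) := by
    intro m
    rcases fin2_cases (ν m) with h0 | h1
    · simp [v2, h0]
    · have h2 := hcon m h1
      rcases fin2_cases (ν (m + e)) with h3 | h3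
      · exact absurd h3 h2
      · simp [v2, h1, h3]
  set s : ℕ → ℕ := fun t => ∑ r ∈ Finset.range e, v2 (ν (t * e + r)) with hsdef
  have hterm : ∀ t r, v2 (ν (t * e + r)) ≤ v2 (ν ((t + 1) * e + r)) := by
    intro t r
    have := mono (t * e + r)
    have he2 : t * e + r + e = (t + 1) * e + r := by ring
    rwa [he2] at this
  have smono : Monotone s := by
    apply monotone_nat_of_le_succ
    intro t
    exact Finset.sum_le_sum fun r _ => hterm t r
  have sbd : ∀ t, s t ≤ e := by
    intro t
    calc s t ≤ ∑ r ∈ Finset.range e, 1 := Finset.sum_le_sum fun r _ => v2_le _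
    _ = e := by simp
  obtain ⟨M, hM⟩ := exists_stable e s smono sbd
  apply hν
  refine ⟨M * e, e, he, fun n hn => ?_⟩
  set t := n / e with htdef
  set r := n % e with hrdef
  have hn1 : n = t * e + r := by
    rw [htdef, hrdef, Nat.mul_comm]
    exact (Nat.div_add_mod n e).symm
  have hr : r ∈ Finset.range e := Finset.mem_range.mpr (Nat.mod_lt _ he)
  have hMt : M ≤ t := by
    by_contra hlt
    push_neg at hlt
    have : n < M * e := by
      calc n = t * e + r := hn1
      _ < (t + 1) * e := by have := Finset.mem_range.mp hr; nlinarith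
      _ ≤ M * e := Nat.mul_le_mul_right e (by omega)
    omega
  have h1 : s t = s (t + 1) := by rw [hM t hMt, hM (t + 1) (by omega)]
  have h2 := (Finset.sum_eq_sum_iff_of_le (fun r _ => hterm t r)).mp h1 r hr
  have he2 : n + e = (t + 1) * e + r := by rw [hn1]; ring
  have hne : ν (n + e) = ν ((t + 1) * e + r) := by rw [he2]
  have hnn : ν n = ν (t * e + r) := by rw [← hn1]
  apply v2_inj
  rw [hne, hnn]
  exact h2.symm

lemma flip_not_per {ν : ℕ → Fin 2} (hν : ¬ UltimatelyPeriodic ν) :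
    ¬ UltimatelyPeriodic (fun m => 1 - ν m) := by
  intro ⟨M, q, hq, hper⟩
  exact hν ⟨M, q, hq, fun n hn => by
    have h := hper n hn
    have key : ∀ a b : Fin 2, (1 : Fin 2) - a = 1 - b → a = b := by decide
    exact key _ _ h⟩

lemma jump' {ν : ℕ → Fin 2} (hν : ¬ UltimatelyPeriodic ν) {e : ℕ} (he : 0 < e) :
    ∃ m, ν m = 0 ∧ ν (m + e) = 1 := by
  obtain ⟨m, h1, h2⟩ := jump (flip_not_per hν) he
  refine ⟨m, ?_, ?_⟩
  · have : ∀ a : Fin 2, (1 : Fin 2) - a = 1 → a = 0 := by decide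
    exact this _ h1
  · have : ∀ a : Fin 2, (1 : Fin 2) - a = 0 → a = 1 := by decide
    exact this _ h2

lemma both_values {ω : ℕ → Fin 2} (hap : ¬ UltimatelyPeriodic ω) (N : ℕ) :
    (∃ j, N ≤ j ∧ ω j = 0) ∧ (∃ j, N ≤ j ∧ ω j = 1) := by
  unfold UltimatelyPeriodic at hap
  push_neg at hap
  obtain ⟨n, hn, hne⟩ := hap N 1 one_pos
  rcases fin2_cases (ω n) with h | h
  · rcases fin2_cases (ω (n + 1)) with h' | h'
    · exact absurd (h'.trans h.symm) hne
    · exact ⟨⟨n, hn, h⟩, ⟨n + 1, by omega, h'⟩⟩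
  · rcases fin2_cases (ω (n + 1)) with h' | h'
    · exact ⟨⟨n + 1, by omega, h'⟩, ⟨n, hn, h⟩⟩
    · exact absurd (h'.trans h.symm) hne


def Kset (ω : ℕ → Fin 2) (n : ℕ) : Set ℕ := {v | ∃ i, cnt ω i n = v}

lemma aC_eq (ω : ℕ → Fin 2) (n : ℕ) :
    abelianComplexity ω n = Set.ncard (Kset ω n) := by
  have hK : Kset ω n =
      (fun c : Fin 2 → ℕ => c 1) '' {c | ∃ i : ℕ, c = fun a => (factor ω i n).count a} := by
    ext v
    constructor
    · rintro ⟨i, hi⟩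
      exact ⟨_, ⟨i, rfl⟩, hi⟩
    · rintro ⟨c, ⟨i, rfl⟩, rfl⟩
      exact ⟨i, rfl⟩
  rw [abelianComplexity, hK, Set.ncard_image_of_injOn]
  rintro c ⟨i, rfl⟩ c' ⟨j, rfl⟩ h
  simp only at h
  have hlen : ∀ m : ℕ, (factor ω m n).length = n := by
    intro m; simp [factor]
  have hi := count_zero_add_count_one (factor ω i n)
  have hj := count_zero_add_count_one (factor ω j n)
  rw [hlen i] at hi
  rw [hlen j] at hj
  funext a
  rcases fin2_cases a with ha | ha <;> subst ha <;> omega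

section P

variable {ω : ℕ → Fin 2} {p : ℕ}

lemma v2_zero : v2 0 = 0 := rfl
lemma v2_one : v2 1 = 1 := rfl
lemma v2_one_sub_one : v2 ((1:Fin 2) - 1) = 0 := rfl
lemma v2_one_sub_zero : v2 ((1:Fin 2) - 0) = 1 := rfl

lemma block (hp : p ≤ 1) (hP : ∀ m, ω (2*m+p+1) = 1 - ω (2*m+p))
    {q : ℕ} (hq : q % 2 = p) : v2 (ω q) + v2 (ω (q+1)) = 1 := by
  have hq' : 2*(q/2) + p = q := by omega
  have h := hP (q/2)
  rw [hq'] at h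
  rw [h]
  exact v2_one_sub _

lemma cnt_even_p (hp : p ≤ 1) (hP : ∀ m, ω (2*m+p+1) = 1 - ω (2*m+p))
    {i : ℕ} (hi : i % 2 = p) (k : ℕ) : cnt ω i (2*k) = k := by
  induction k with
  | zero => simpa using cnt_zero ω i
  | succ k ih =>
    have h1 : 2*(k+1) = (2*k+1)+1 := by ring
    rw [h1, cnt_succ_right]
    have h2 := cnt_succ_right ω i (2*k)
    have hb := block hp hP (q := i + 2*k) (by omega)
    have e1 : i + (2*k+1) = (i+2*k)+1 := by omega
    rw [e1]
    omega

lemma cnt_odd_p (hp : p ≤ 1) (hP : ∀ m, ω (2*m+p+1) = 1 - ω (2*m+p))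
    {i : ℕ} (hi : i % 2 = p) (k : ℕ) :
    cnt ω i (2*k+1) = k + v2 (ω (i + 2*k)) := by
  rw [cnt_succ_right, cnt_even_p hp hP hi k]

lemma cnt_odd_np (hp : p ≤ 1) (hP : ∀ m, ω (2*m+p+1) = 1 - ω (2*m+p))
    {i : ℕ} (hi : i % 2 ≠ p) (k : ℕ) :
    cnt ω i (2*k+1) = k + v2 (ω i) := by
  rw [cnt_succ_left, cnt_even_p hp hP (show (i+1) % 2 = p by omega) k]
  omega

lemma cnt_even_np (hp : p ≤ 1) (hP : ∀ m, ω (2*m+p+1) = 1 - ω (2*m+p))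
    {i : ℕ} (hi : i % 2 ≠ p) (k : ℕ) :
    cnt ω i (2*k+2) = k + v2 (ω i) + v2 (ω (i + 2*k + 1)) := by
  have h1 : 2*k+2 = (2*k+1)+1 := by ring
  rw [h1, cnt_succ_left, cnt_odd_p hp hP (show (i+1) % 2 = p by omega) k]
  have e : i + 1 + 2*k = i + 2*k + 1 := by omega
  rw [e]
  omega

lemma relP (hp01 : p = 0 ∨ p = 1) (hP : ∀ m, ω (2*m+p+1) = 1 - ω (2*m+p)) (m : ℕ) :
    ω (2*m+p) = 1 - ω (2*(m+p) + (1-p)) := by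
  rcases hp01 with h | h <;> subst h
  · have h := hP m
    norm_num at h ⊢
    exact fin2_flip h
  · have h := hP m
    have e : 2*(m+1) + (1-1) = 2*m+1+1 := by ring
    rw [e]
    exact fin2_flip h

lemma nu_not_per (hap : ¬ UltimatelyPeriodic ω) (hp01 : p = 0 ∨ p = 1)
    (hP : ∀ m, ω (2*m+p+1) = 1 - ω (2*m+p)) :
    ¬ UltimatelyPeriodic (fun m => ω (2*m + (1-p))) := by
  have hp : p ≤ 1 := by rcases hp01 with h|h <;> omega
  intro ⟨M, q, hq, hper⟩
  apply hap
  refine ⟨2*M+2, 2*q, by omega, fun n hn => ?_⟩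
  by_cases hc : n % 2 = 1 - p
  · have h : ω (2*(n/2+q) + (1-p)) = ω (2*(n/2) + (1-p)) := hper (n/2) (by omega)
    calc ω (n + 2*q) = ω (2*(n/2+q) + (1-p)) := by congr 1; omega
    _ = ω (2*(n/2) + (1-p)) := h
    _ = ω n := by congr 1; omega
  · have hc2 : n % 2 = p := by omega
    have h : ω (2*(n/2+p+q) + (1-p)) = ω (2*(n/2+p) + (1-p)) := hper (n/2+p) (by omega)
    have r2 := relP hp01 hP (n/2 + q)
    have r1 := relP hp01 hP (n/2)
    have e3 : 2*(n/2+q+p) + (1-p) = 2*(n/2+p+q) + (1-p) := by ring_nf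
    rw [e3, h] at r2
    rw [← r1] at r2
    calc ω (n + 2*q) = ω (2*(n/2+q) + p) := by congr 1; omega
    _ = ω (2*(n/2) + p) := r2
    _ = ω n := by congr 1; omega

lemma K_odd (hap : ¬ UltimatelyPeriodic ω) (hp01 : p = 0 ∨ p = 1)
    (hP : ∀ m, ω (2*m+p+1) = 1 - ω (2*m+p)) (k : ℕ) :
    Kset ω (2*k+1) = {k, k+1} := by
  have hp : p ≤ 1 := by rcases hp01 with h|h <;> omega
  ext v
  simp only [Kset, Set.mem_setOf_eq, Set.mem_insert_iff, Set.mem_singleton_iff]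
  constructor
  · rintro ⟨i, rfl⟩
    by_cases hi : i % 2 = p
    · rw [cnt_odd_p hp hP hi k]; have := v2_le (ω (i+2*k)); omega
    · rw [cnt_odd_np hp hP hi k]; have := v2_le (ω i); omega
  · intro hv
    obtain ⟨⟨j0, hj0, hj0v⟩, ⟨j1, hj1, hj1v⟩⟩ := both_values hap (2*k)
    rcases hv with h | h <;> rw [h]
    · by_cases hj : j0 % 2 = p
      · refine ⟨j0 - 2*k, ?_⟩
        rw [cnt_odd_p hp hP (show (j0-2*k) % 2 = p by omega) k]
        rw [show j0 - 2*k + 2*k = j0 by omega, hj0v, v2_zero]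
        omega
      · refine ⟨j0, ?_⟩
        rw [cnt_odd_np hp hP hj k, hj0v, v2_zero]
        omega
    · by_cases hj : j1 % 2 = p
      · refine ⟨j1 - 2*k, ?_⟩
        rw [cnt_odd_p hp hP (show (j1-2*k) % 2 = p by omega) k]
        rw [show j1 - 2*k + 2*k = j1 by omega, hj1v, v2_one]
      · refine ⟨j1, ?_⟩
        rw [cnt_odd_np hp hP hj k, hj1v, v2_one]

lemma K_even (hap : ¬ UltimatelyPeriodic ω) (hp01 : p = 0 ∨ p = 1)
    (hP : ∀ m, ω (2*m+p+1) = 1 - ω (2*m+p)) (k : ℕ) :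
    Kset ω (2*k+2) = {k, k+1, k+2} := by
  have hp : p ≤ 1 := by rcases hp01 with h|h <;> omega
  have hν := nu_not_per hap hp01 hP
  ext v
  simp only [Kset, Set.mem_setOf_eq, Set.mem_insert_iff, Set.mem_singleton_iff]
  constructor
  · rintro ⟨i, rfl⟩
    by_cases hi : i % 2 = p
    · rw [show 2*k+2 = 2*(k+1) by ring, cnt_even_p hp hP hi (k+1)]
      omega
    · rw [cnt_even_np hp hP hi k]
      have := v2_le (ω i); have := v2_le (ω (i+2*k+1)); omega
  · intro hv
    rcases hv with h | h | h <;> rw [h]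
    · obtain ⟨m, hm0, hm1⟩ := jump' hν (e := k+1) (by omega)
      have hm0' : ω (2*m + (1-p)) = 0 := hm0
      have hm1' : ω (2*(m+k+1) + (1-p)) = 1 := hm1
      refine ⟨2*m + (1-p), ?_⟩
      rw [cnt_even_np hp hP (show (2*m+(1-p)) % 2 ≠ p by omega) k]
      have r := relP hp01 hP (m+k+1-p)
      have e1 : 2*(m+k+1-p)+p = 2*m+(1-p)+2*k+1 := by omega
      have e2 : 2*(m+k+1-p+p)+(1-p) = 2*(m+k+1)+(1-p) := by omega
      rw [e1, e2] at r
      rw [r, hm0', hm1', v2_zero, v2_one_sub_one]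
      omega
    · refine ⟨p, ?_⟩
      rw [show 2*k+2 = 2*(k+1) by ring, cnt_even_p hp hP (show p % 2 = p by omega) (k+1)]
    · obtain ⟨m, hm0, hm1⟩ := jump hν (e := k+1) (by omega)
      have hm0' : ω (2*m + (1-p)) = 1 := hm0
      have hm1' : ω (2*(m+k+1) + (1-p)) = 0 := hm1
      refine ⟨2*m + (1-p), ?_⟩
      rw [cnt_even_np hp hP (show (2*m+(1-p)) % 2 ≠ p by omega) k]
      have r := relP hp01 hP (m+k+1-p)
      have e1 : 2*(m+k+1-p)+p = 2*m+(1-p)+2*k+1 := by omega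
      have e2 : 2*(m+k+1-p+p)+(1-p) = 2*(m+k+1)+(1-p) := by omega
      rw [e1, e2] at r
      rw [r, hm0', hm1', v2_one, v2_one_sub_zero]

lemma complexity_of_P (hap : ¬ UltimatelyPeriodic ω)
    (hp01 : p = 0 ∨ p = 1) (hP : ∀ m, ω (2*m+p+1) = 1 - ω (2*m+p)) :
    (∀ n : ℕ, Odd n → abelianComplexity ω n = 2) ∧
    (∀ n : ℕ, Even n → 2 ≤ n → abelianComplexity ω n = 3) := by
  constructor
  · intro n hn
    obtain ⟨k, hk⟩ : ∃ k, n = 2*k+1 := by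
      rcases hn with ⟨k, hk⟩; exact ⟨k, by omega⟩
    subst hk
    rw [aC_eq, K_odd hap hp01 hP k, Set.ncard_pair (by omega : k ≠ k+1)]
  · intro n hn h2
    obtain ⟨k, hk⟩ : ∃ k, n = 2*k+2 := by
      rcases hn with ⟨r, hr⟩; exact ⟨r-1, by omega⟩
    subst hk
    rw [aC_eq, K_even hap hp01 hP k]
    exact Set.ncard_eq_three.mpr ⟨k, k+1, k+2, by omega, by omega, by omega, rfl⟩

end P

lemma pairs_of_K2 {ω : ℕ → Fin 2} (h3 : abelianComplexity ω 2 = 3) :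
    (∃ i, ω i = 0 ∧ ω (i+1) = 0) ∧ (∃ i, ω i = 1 ∧ ω (i+1) = 1) := by
  rw [aC_eq] at h3
  obtain ⟨a, b, c, hab, hac, hbc, hK⟩ := Set.ncard_eq_three.mp h3
  have hmem : ∀ x ∈ Kset ω 2, x ≤ 2 := by
    rintro x ⟨i, rfl⟩; exact cnt_le ω i 2
  have ha := hmem a (by rw [hK]; simp)
  have hb := hmem b (by rw [hK]; simp)
  have hc := hmem c (by rw [hK]; simp)
  have h0 : (0:ℕ) ∈ Kset ω 2 := by
    rw [hK]
    simp only [Set.mem_insert_iff, Set.mem_singleton_iff]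
    omega
  have h2 : (2:ℕ) ∈ Kset ω 2 := by
    rw [hK]
    simp only [Set.mem_insert_iff, Set.mem_singleton_iff]
    omega
  obtain ⟨i, hi⟩ := h0
  obtain ⟨j, hj⟩ := h2
  rw [cnt_two] at hi hj
  have li1 := v2_le (ω i); have li2 := v2_le (ω (i+1))
  have lj1 := v2_le (ω j); have lj2 := v2_le (ω (j+1))
  exact ⟨⟨i, v2_eq_zero (by omega), v2_eq_zero (by omega)⟩,
         ⟨j, v2_eq_one (by omega), v2_eq_one (by omega)⟩⟩

lemma clash {ω : ℕ → Fin 2} (hodd : ∀ n : ℕ, Odd n → abelianComplexity ω n = 2)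
    {i j : ℕ} (hi1 : ω i = 1) (hi2 : ω (i+1) = 1) (hj1 : ω j = 0) (hj2 : ω (j+1) = 0)
    (hpar : i % 2 ≠ j % 2) : False := by
  rcases Nat.lt_trichotomy i j with hlt | heq | hgt
  · set n := j - i with hn
    have h2 := hodd n (by rw [Nat.odd_iff]; omega)
    rw [aC_eq] at h2
    obtain ⟨a, b, hab, hK⟩ := Set.ncard_eq_two.mp h2
    have s1 := cnt_step ω i n
    have s2 := cnt_step ω (i+1) n
    rw [show i + n = j by omega] at s1
    rw [show i + 1 + n = j + 1 by omega] at s2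
    rw [hi1, hj1, v2_zero, v2_one] at s1
    rw [hi2, hj2, v2_zero, v2_one] at s2
    have m1 : cnt ω i n ∈ Kset ω n := ⟨i, rfl⟩
    have m2 : cnt ω (i+1) n ∈ Kset ω n := ⟨i+1, rfl⟩
    have m3 : cnt ω (i+1+1) n ∈ Kset ω n := ⟨i+1+1, rfl⟩
    rw [hK] at m1 m2 m3
    simp only [Set.mem_insert_iff, Set.mem_singleton_iff] at m1 m2 m3
    omega
  · omega
  · set n := i - j with hn
    have h2 := hodd n (by rw [Nat.odd_iff]; omega)
    rw [aC_eq] at h2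
    obtain ⟨a, b, hab, hK⟩ := Set.ncard_eq_two.mp h2
    have s1 := cnt_step ω j n
    have s2 := cnt_step ω (j+1) n
    rw [show j + n = i by omega] at s1
    rw [show j + 1 + n = i + 1 by omega] at s2
    rw [hj1, hi1, v2_zero, v2_one] at s1
    rw [hj2, hi2, v2_zero, v2_one] at s2
    have m1 : cnt ω j n ∈ Kset ω n := ⟨j, rfl⟩
    have m2 : cnt ω (j+1) n ∈ Kset ω n := ⟨j+1, rfl⟩
    have m3 : cnt ω (j+1+1) n ∈ Kset ω n := ⟨j+1+1, rfl⟩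
    rw [hK] at m1 m2 m3
    simp only [Set.mem_insert_iff, Set.mem_singleton_iff] at m1 m2 m3
    omega

end TM

/-- An aperiodic binary word `ω` has abelian complexity `2` at odd lengths and
`3` at even lengths `≥ 2` iff `ω = μ(ω')`, `ω = 0μ(ω')` or `ω = 1μ(ω')`
for some infinite binary word `ω'`. -/
theorem abelianComplexity_TM_characterization
    (ω : ℕ → Fin 2) (hap : ¬ UltimatelyPeriodic ω) :
    ((∀ n : ℕ, Odd n → abelianComplexity ω n = 2) ∧
     (∀ n : ℕ, Even n → 2 ≤ n → abelianComplexity ω n = 3)) ↔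
    (∃ ω' : ℕ → Fin 2,
      ω = muWord ω' ∨
      ω = (fun n => if n = 0 then (0 : Fin 2) else muWord ω' (n - 1)) ∨
      ω = (fun n => if n = 0 then (1 : Fin 2) else muWord ω' (n - 1))) := by
  constructor
  · rintro ⟨hodd, heven⟩
    obtain ⟨⟨i0, hi01, hi02⟩, ⟨i1, hi11, hi12⟩⟩ :=
      TM.pairs_of_K2 (heven 2 (by decide) (by norm_num))
    have claim : (∀ q : ℕ, q % 2 = 0 → ω (q+1) = 1 - ω q) ∨
        (∀ q : ℕ, q % 2 = 1 → ω (q+1) = 1 - ω q) := by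
      by_contra hcon
      push_neg at hcon
      obtain ⟨⟨q0, hq0, hq0'⟩, ⟨q1, hq1, hq1'⟩⟩ := hcon
      have e0 : ω (q0+1) = ω q0 := TM.fin2_ne_flip hq0'
      have e1 : ω (q1+1) = ω q1 := TM.fin2_ne_flip hq1'
      rcases TM.fin2_cases (ω q0) with a0 | a0 <;> rcases TM.fin2_cases (ω q1) with a1 | a1
      · by_cases hp : i1 % 2 = 0
        · exact TM.clash hodd hi11 hi12 a1 (e1.trans a1) (by omega)
        · exact TM.clash hodd hi11 hi12 a0 (e0.trans a0) (by omega)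
      · exact TM.clash hodd a1 (e1.trans a1) a0 (e0.trans a0) (by omega)
      · exact TM.clash hodd a0 (e0.trans a0) a1 (e1.trans a1) (by omega)
      · by_cases hp : i0 % 2 = 0
        · exact TM.clash hodd a1 (e1.trans a1) hi01 hi02 (by omega)
        · exact TM.clash hodd a0 (e0.trans a0) hi01 hi02 (by omega)
    rcases claim with hcl | hcl
    · refine ⟨fun m => ω (2*m), Or.inl ?_⟩
      funext n
      simp only [muWord]
      by_cases hn : n % 2 = 0
      · rw [if_pos hn]; congr 1; omega
      · rw [if_neg hn]
        have h := hcl (2*(n/2)) (by omega)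
        rw [show 2*(n/2)+1 = n by omega] at h
        exact h
    · set ω' : ℕ → Fin 2 := fun m => ω (2*m+1) with hω'
      have key : ∀ n : ℕ, n ≠ 0 → muWord ω' (n-1) = ω n := by
        intro n hn
        simp only [muWord, hω']
        by_cases hpar : (n-1) % 2 = 0
        · rw [if_pos hpar]; congr 1; omega
        · rw [if_neg hpar]
          have h := hcl (n-1) (by omega)
          rw [show n-1+1 = n by omega] at h
          rw [show 2*((n-1)/2)+1 = n-1 by omega]
          exact h.symm
      rcases TM.fin2_cases (ω 0) with h0 | h0
      · refine ⟨ω', Or.inr (Or.inl ?_)⟩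
        funext n
        show ω n = if n = 0 then 0 else muWord ω' (n-1)
        by_cases hn : n = 0
        · rw [if_pos hn, hn]; exact h0
        · rw [if_neg hn]; exact (key n hn).symm
      · refine ⟨ω', Or.inr (Or.inr ?_)⟩
        funext n
        show ω n = if n = 0 then 1 else muWord ω' (n-1)
        by_cases hn : n = 0
        · rw [if_pos hn, hn]; exact h0
        · rw [if_neg hn]; exact (key n hn).symm
  · rintro ⟨ω', h | h | h⟩
    · apply TM.complexity_of_P hap (p := 0) (Or.inl rfl)
      intro m
      rw [h]
      simp only [muWord]
      rw [if_neg (by omega : ¬((2*m+0+1) % 2 = 0)), if_pos (by omega : (2*m+0) % 2 = 0)]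
      rw [show (2*m+0+1)/2 = m by omega, show (2*m+0)/2 = m by omega]
    · apply TM.complexity_of_P hap (p := 1) (Or.inr rfl)
      intro m
      rw [h]
      beta_reduce
      rw [if_neg (by omega : ¬(2*m+1+1 = 0)), if_neg (by omega : ¬(2*m+1 = 0))]
      rw [show 2*m+1+1-1 = 2*m+1 by omega, show 2*m+1-1 = 2*m by omega]
      simp only [muWord]
      rw [if_neg (by omega : ¬((2*m+1) % 2 = 0)), if_pos (by omega : (2*m) % 2 = 0)]
      rw [show (2*m+1)/2 = m by omega, show (2*m)/2 = m by omega]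
    · apply TM.complexity_of_P hap (p := 1) (Or.inr rfl)
      intro m
      rw [h]
      beta_reduce
      rw [if_neg (by omega : ¬(2*m+1+1 = 0)), if_neg (by omega : ¬(2*m+1 = 0))]
      rw [show 2*m+1+1-1 = 2*m+1 by omega, show 2*m+1-1 = 2*m by omega]
      simp only [muWord]
      rw [if_neg (by omega : ¬((2*m+1) % 2 = 0)), if_pos (by omega : (2*m) % 2 = 0)]
      rw [show (2*m+1)/2 = m by omega, show (2*m)/2 = m by omega]
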